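/- (Equational criterion for flatness over semirings.) Let A be a commutative semiring, M a flat A-module, and v : Aⁿ → M a homomorphism from a finite free module. Suppose f, g : A → Aⁿ are two homomorphisms with v ∘ f = v ∘ g. Then v factors as Aⁿ → F → M where F is a finite free module and the composite Aⁿ → F coequalizes f and g (i.e., the images of f and g in F under the factoring map agree). -/

import Mathlib

open TensorProduct

/-- Flatness of a semimodule `M` over a commutative semiring `A`: the functor
`- ⊗[A] M` preserves equalizers, i.e. for every pair of `A`-linear maps
`f g : N → P`, the canonical map `eqLocus f g ⊗ M → N ⊗ M` is injective with image
exactly the equalizer of `f ⊗ 1` and `g ⊗ 1`. -/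
def TensorFlat (A : Type) [CommSemiring A] (M : Type) [AddCommMonoid M]
    [Module A M] : Prop :=
  ∀ (N P : Type) [AddCommMonoid N] [AddCommMonoid P] [Module A N] [Module A P]
    (f g : N →ₗ[A] P),
    Function.Injective
      (LinearMap.rTensor M (LinearMap.eqLocus f g).subtype) ∧
    LinearMap.range (LinearMap.rTensor M (LinearMap.eqLocus f g).subtype) =
      LinearMap.eqLocus (LinearMap.rTensor M f) (LinearMap.rTensor M g)


theorem exists_fin_tensor_rep {R : Type*} [CommSemiring R] {M N : Type*}
    [AddCommMonoid M] [AddCommMonoid N] [Module R M] [Module R N]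
    (s : M ⊗[R] N) : ∃ (m : ℕ) (k : Fin m → M) (x : Fin m → N),
      s = ∑ j, k j ⊗ₜ[R] x j := by
  obtain ⟨S, hS⟩ := TensorProduct.exists_finset s
  refine ⟨Fintype.card {p // p ∈ S},
    fun j => ((Fintype.equivFin {p // p ∈ S}).symm j : M × N).1,
    fun j => ((Fintype.equivFin {p // p ∈ S}).symm j : M × N).2, ?_⟩
  rw [hS, ← Finset.sum_coe_sort S]
  exact (Equiv.sum_comp (Fintype.equivFin {p // p ∈ S}).symm
    (fun p : {p // p ∈ S} => (p : M × N).1 ⊗ₜ[R] (p : M × N).2)).symm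

/-- **Equational criterion for flatness over semirings.**
If `M` is a flat module over a commutative semiring `A`, `v : Aⁿ → M` is a
homomorphism and `f, g : A → Aⁿ` satisfy `v ∘ f = v ∘ g`, then `v` factors through a
finite free module `Aᵐ` in which the relation `f = g` holds. -/
theorem stmt11 (A : Type) [CommSemiring A] (M : Type) [AddCommMonoid M] [Module A M]
    (hM : TensorFlat A M) (n : ℕ) (v : (Fin n → A) →ₗ[A] M)
    (f g : A →ₗ[A] (Fin n → A)) (hrel : v ∘ₗ f = v ∘ₗ g) :
    ∃ (m : ℕ) (w : (Fin n → A) →ₗ[A] (Fin m → A)) (u : (Fin m → A) →ₗ[A] M),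
      u ∘ₗ w = v ∧ w ∘ₗ f = w ∘ₗ g := by
  classical
  -- dualize f, g to functionals F, G on Aⁿ
  set F : (Fin n → A) →ₗ[A] A := ∑ i, f 1 i • LinearMap.proj i with hFdef
  set G : (Fin n → A) →ₗ[A] A := ∑ i, g 1 i • LinearMap.proj i with hGdef
  have hFapp : ∀ y : Fin n → A, F y = ∑ i, f 1 i * y i := by
    intro y; simp [hFdef, LinearMap.sum_apply, smul_eq_mul]
  have hGapp : ∀ y : Fin n → A, G y = ∑ i, g 1 i * y i := by
    intro y; simp [hGdef, LinearMap.sum_apply, smul_eq_mul]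
  set K := LinearMap.eqLocus F G with hKdef
  set t : (Fin n → A) ⊗[A] M :=
    ∑ i, (Pi.single i 1 : Fin n → A) ⊗ₜ[A] v (Pi.single i 1) with htdef
  -- t lies in the equalizer of F ⊗ 1 and G ⊗ 1
  have hsingle : ∀ y : Fin n → A, v y = ∑ i, y i • v (Pi.single i 1) := by
    intro y
    have : y = ∑ i, y i • (Pi.single i 1 : Fin n → A) := by
      ext j
      simp [Finset.sum_apply, Pi.single_apply, Finset.sum_ite_eq']
    conv_lhs => rw [this]
    simp
  have heq : LinearMap.rTensor M F t = LinearMap.rTensor M G t := by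
    have hv1 : v (f 1) = v (g 1) := by
      have := congrArg (fun h : A →ₗ[A] M => h 1) hrel
      simpa using this
    have hL : LinearMap.rTensor M F t = (1 : A) ⊗ₜ[A] v (f 1) := by
      rw [htdef, map_sum]
      have : ∀ i, LinearMap.rTensor M F
          ((Pi.single i 1 : Fin n → A) ⊗ₜ[A] v (Pi.single i 1))
          = (1 : A) ⊗ₜ[A] (f 1 i • v (Pi.single i 1)) := by
        intro i
        rw [LinearMap.rTensor_tmul]
        have : F (Pi.single i 1) = f 1 i := by
          rw [hFapp]
          simp [Pi.single_apply, Finset.sum_ite_eq']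
        rw [this, ← TensorProduct.smul_tmul, smul_eq_mul, mul_one]
      rw [Finset.sum_congr rfl fun i _ => this i, ← TensorProduct.tmul_sum,
        ← hsingle]
    have hR : LinearMap.rTensor M G t = (1 : A) ⊗ₜ[A] v (g 1) := by
      rw [htdef, map_sum]
      have : ∀ i, LinearMap.rTensor M G
          ((Pi.single i 1 : Fin n → A) ⊗ₜ[A] v (Pi.single i 1))
          = (1 : A) ⊗ₜ[A] (g 1 i • v (Pi.single i 1)) := by
        intro i
        rw [LinearMap.rTensor_tmul]
        have : G (Pi.single i 1) = g 1 i := by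
          rw [hGapp]
          simp [Pi.single_apply, Finset.sum_ite_eq']
        rw [this, ← TensorProduct.smul_tmul, smul_eq_mul, mul_one]
      rw [Finset.sum_congr rfl fun i _ => this i, ← TensorProduct.tmul_sum,
        ← hsingle]
    rw [hL, hR, hv1]
  -- hence t comes from K ⊗ M by flatness
  have hmem : t ∈ LinearMap.range (LinearMap.rTensor M K.subtype) := by
    rw [(hM _ _ F G).2, LinearMap.mem_eqLocus]
    exact heq
  obtain ⟨s, hs⟩ := hmem
  -- write s as a finite sum of elementary tensors
  obtain ⟨m, k, x, hsk⟩ := exists_fin_tensor_rep s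
  have hsum : t = ∑ j, ((k j : Fin n → A)) ⊗ₜ[A] x j := by
    rw [← hs, hsk, map_sum]
    simp [LinearMap.rTensor_tmul]
  -- the key identity: v(eᵢ) = ∑ⱼ (kⱼ)ᵢ • xⱼ
  have key : ∀ i, v (Pi.single i 1) = ∑ j, (k j : Fin n → A) i • x j := by
    intro i
    have := congrArg
      (fun z => (TensorProduct.lid A M)
        (LinearMap.rTensor M (LinearMap.proj (R := A) (φ := fun _ : Fin n => A) i) z))
      hsum
    simp only [htdef, map_sum, LinearMap.rTensor_tmul, LinearMap.proj_apply] at this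
    simpa [Pi.single_apply, Finset.sum_ite_eq'] using this
  -- construct w and u
  refine ⟨m, LinearMap.pi fun j => ∑ i, ((k j : Fin n → A) i) • LinearMap.proj i,
    Fintype.linearCombination A x, ?_, ?_⟩
  · apply (Pi.basisFun A (Fin n)).ext
    intro i
    simp only [Pi.basisFun_apply, LinearMap.comp_apply]
    rw [Fintype.linearCombination_apply, key i]
    refine Finset.sum_congr rfl fun j _ => ?_
    congr 1
    simp [LinearMap.pi_apply, LinearMap.sum_apply, Pi.single_apply,
      Finset.sum_ite_eq', smul_eq_mul]
  · apply LinearMap.ext_ring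
    simp only [LinearMap.comp_apply]
    funext j
    simp only [LinearMap.pi_apply, LinearMap.sum_apply, LinearMap.smul_apply,
      LinearMap.proj_apply, smul_eq_mul]
    have hkj : F (k j) = G (k j) := (k j).2
    rw [hFapp, hGapp] at hkj
    calc ∑ i, (k j : Fin n → A) i * f 1 i
        = ∑ i, f 1 i * (k j : Fin n → A) i := by simp [mul_comm]
      _ = ∑ i, g 1 i * (k j : Fin n → A) i := hkj
      _ = ∑ i, (k j : Fin n → A) i * g 1 i := by simp [mul_comm]
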